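/- (Eigenvalue bound for the weighted treated-sample covariance matrix.) Fix an assignment vector Z ∈ {0,1}ⁿ having exactly n_{[m]1} ones in each block m, where n_{[m]1} ≥ 2 and e_{[m]} = n_{[m]1}/n_{[m]} ≥ c for some c > 0 and every m. Then the largest eigenvalue of Σ̂_{XX} = ∑_{m=1}^M π_{[m]} s²_{[m]X} satisfies Λ_max(Σ̂_{XX}) ≤ (2/c) Λ_max(Σ_{XX}), where Σ_{XX} = ∑_{m=1}^M π_{[m]} S²_{[m]X}. -/

import Mathlib

open Finset


lemma quad_form_sum_sq {p : ℕ} (u : Fin p → ℝ) {α : Type*} (s : Finset α) (d : α → Fin p → ℝ) :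
    ∑ j, ∑ l, u j * (∑ i ∈ s, d i j * d i l) * u l = ∑ i ∈ s, (∑ j, u j * d i j)^2 := by
  have h : ∀ i, (∑ j, u j * d i j)^2 = ∑ j, ∑ l, u j * (d i j * d i l) * u l := by
    intro i
    rw [sq, Finset.sum_mul_sum]
    exact Finset.sum_congr rfl fun j _ => Finset.sum_congr rfl fun l _ => by ring
  calc ∑ j, ∑ l, u j * (∑ i ∈ s, d i j * d i l) * u l
      = ∑ j, ∑ i ∈ s, ∑ l, u j * (d i j * d i l) * u l := by
        refine Finset.sum_congr rfl fun j _ => ?_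
        simp_rw [Finset.mul_sum, Finset.sum_mul]
        exact Finset.sum_comm
    _ = ∑ i ∈ s, ∑ j, ∑ l, u j * (d i j * d i l) * u l := Finset.sum_comm
    _ = ∑ i ∈ s, (∑ j, u j * d i j)^2 := Finset.sum_congr rfl fun i _ => (h i).symm

lemma quad_form_weighted {M p : ℕ} (u : Fin p → ℝ) {β : Fin M → Type*} [∀ m, Fintype (β m)]
    (s : (m : Fin M) → Finset (β m)) (w k : Fin M → ℝ) (d : (m : Fin M) → β m → Fin p → ℝ) :
    ∑ j, ∑ l, u j * (∑ m, w m * (k m * ∑ i ∈ s m, d m i j * d m i l)) * u l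
      = ∑ m, (w m * k m) * ∑ i ∈ s m, (∑ j, u j * d m i j)^2 := by
  have step : ∀ m, ∑ j, ∑ l, u j * (w m * (k m * ∑ i ∈ s m, d m i j * d m i l)) * u l
      = (w m * k m) * ∑ i ∈ s m, (∑ j, u j * d m i j)^2 := by
    intro m
    rw [← quad_form_sum_sq u (s m) (d m), Finset.mul_sum]
    refine Finset.sum_congr rfl fun j _ => ?_
    rw [Finset.mul_sum]
    exact Finset.sum_congr rfl fun l _ => by ring
  calc ∑ j, ∑ l, u j * (∑ m, w m * (k m * ∑ i ∈ s m, d m i j * d m i l)) * u l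
      = ∑ j, ∑ l, ∑ m, u j * (w m * (k m * ∑ i ∈ s m, d m i j * d m i l)) * u l := by
        refine Finset.sum_congr rfl fun j _ => Finset.sum_congr rfl fun l _ => ?_
        rw [Finset.mul_sum, Finset.sum_mul]
    _ = ∑ j, ∑ m, ∑ l, u j * (w m * (k m * ∑ i ∈ s m, d m i j * d m i l)) * u l :=
        Finset.sum_congr rfl fun j _ => Finset.sum_comm
    _ = ∑ m, ∑ j, ∑ l, u j * (w m * (k m * ∑ i ∈ s m, d m i j * d m i l)) * u l :=
        Finset.sum_comm
    _ = _ := Finset.sum_congr rfl fun m _ => step m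

lemma sum_sq_dev_mean_le {α : Type*} (s : Finset α) (hs : s.Nonempty) (v : α → ℝ) (a : ℝ) :
    ∑ i ∈ s, (v i - (∑ i ∈ s, v i) / s.card)^2 ≤ ∑ i ∈ s, (v i - a)^2 := by
  set μ : ℝ := (∑ i ∈ s, v i) / s.card with hμ
  have hcard : (0:ℝ) < (s.card : ℝ) := by exact_mod_cast Finset.card_pos.mpr hs
  have h0 : ∑ i ∈ s, (v i - μ) = 0 := by
    rw [Finset.sum_sub_distrib, hμ]
    rw [Finset.sum_const, nsmul_eq_mul, mul_div_cancel₀ _ hcard.ne', sub_self]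
  have hexp : ∑ i ∈ s, (v i - a)^2
      = ∑ i ∈ s, (v i - μ)^2 + (2*(μ - a)) * (∑ i ∈ s, (v i - μ)) + s.card * (μ - a)^2 := by
    rw [Finset.mul_sum, ← Finset.sum_add_distrib]
    rw [show (s.card : ℝ) * (μ - a)^2 = ∑ _i ∈ s, (μ - a)^2 by
      rw [Finset.sum_const, nsmul_eq_mul]]
    rw [← Finset.sum_add_distrib]
    exact Finset.sum_congr rfl fun i _ => by ring
  rw [h0, mul_zero, add_zero] at hexp
  nlinarith [mul_nonneg hcard.le (sq_nonneg (μ - a))]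


/-- The largest eigenvalue of a symmetric positive semidefinite matrix
(encoded as `Fin p → Fin p → ℝ`), characterized as the supremum of the quadratic form
over unit vectors. -/
noncomputable def lamMax {p : ℕ} (Q : Fin p → Fin p → ℝ) : ℝ :=
  sSup {r : ℝ | ∃ u : Fin p → ℝ, ∑ j, u j ^ 2 = 1 ∧ r = ∑ j, ∑ l, u j * Q j l * u l}

/-- **Eigenvalue bound for the weighted treated-sample covariance matrix.**
For a fixed assignment `A` with `|A m| = n1 m ≥ 2` and propensity scores
`e_[m] = n1 m / nb m ≥ c > 0`,
`Λ_max(Σ̂_XX) ≤ (2/c) Λ_max(Σ_XX)`, where `Σ̂_XX = ∑ₘ π_[m] s²_[m]X` and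
`Σ_XX = ∑ₘ π_[m] S²_[m]X`. -/
theorem sample_cov_eigenvalue_bound (M p : ℕ) (nb n1 : Fin M → ℕ)
    (hnb : ∀ m, 3 ≤ nb m) (hn1 : ∀ m, 2 ≤ n1 m) (hn1' : ∀ m, n1 m ≤ nb m)
    (x : (m : Fin M) → Fin (nb m) → Fin p → ℝ) (c : ℝ) (hc : 0 < c)
    (A : (m : Fin M) → Finset (Fin (nb m))) (hA : ∀ m, (A m).card = n1 m)
    (hce : ∀ m, c ≤ (n1 m : ℝ) / (nb m : ℝ)) :
    let n : ℝ := ∑ m, (nb m : ℝ)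
    let π : Fin M → ℝ := fun m => (nb m : ℝ) / n
    let xbar : (m : Fin M) → Fin p → ℝ := fun m j => (∑ i, x m i j) / (nb m : ℝ)
    let xbar1 : (m : Fin M) → Fin p → ℝ := fun m j => (∑ i ∈ A m, x m i j) / (n1 m : ℝ)
    let Shat : Fin p → Fin p → ℝ := fun j l =>
      ∑ m, π m * ((1 / ((n1 m : ℝ) - 1)) *
        ∑ i ∈ A m, (x m i j - xbar1 m j) * (x m i l - xbar1 m l))
    let Spop : Fin p → Fin p → ℝ := fun j l =>
      ∑ m, π m * ((1 / ((nb m : ℝ) - 1)) *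
        ∑ i, (x m i j - xbar m j) * (x m i l - xbar m l))
    lamMax Shat ≤ (2 / c) * lamMax Spop := by
  intro n π xbar xbar1 Shat Spop
  have hn1R : ∀ m, (2:ℝ) ≤ (n1 m : ℝ) := fun m => by exact_mod_cast hn1 m
  have hnbR : ∀ m, (3:ℝ) ≤ (nb m : ℝ) := fun m => by exact_mod_cast hnb m
  have hπ : ∀ m, 0 ≤ π m := fun m =>
    div_nonneg (Nat.cast_nonneg _) (Finset.sum_nonneg fun _ _ => Nat.cast_nonneg _)
  -- quadratic form decompositions
  have hShat : ∀ u : Fin p → ℝ, ∑ j, ∑ l, u j * Shat j l * u l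
      = ∑ m, (π m * (1/((n1 m:ℝ)-1))) * ∑ i ∈ A m, (∑ j, u j * (x m i j - xbar1 m j))^2 :=
    fun u => quad_form_weighted u A π (fun m => 1/((n1 m:ℝ)-1))
      (fun m i j => x m i j - xbar1 m j)
  have hSpop : ∀ u : Fin p → ℝ, ∑ j, ∑ l, u j * Spop j l * u l
      = ∑ m, (π m * (1/((nb m:ℝ)-1))) * ∑ i, (∑ j, u j * (x m i j - xbar m j))^2 :=
    fun u => quad_form_weighted u (fun m => Finset.univ) π (fun m => 1/((nb m:ℝ)-1))
      (fun m i j => x m i j - xbar m j)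
  have hSpop_nonneg : ∀ u : Fin p → ℝ, 0 ≤ ∑ j, ∑ l, u j * Spop j l * u l := by
    intro u
    rw [hSpop u]
    refine Finset.sum_nonneg fun m _ => mul_nonneg (mul_nonneg (hπ m)
      (le_of_lt (one_div_pos.mpr (by linarith [hnbR m]))))
      (Finset.sum_nonneg fun i _ => sq_nonneg _)
  -- key pointwise inequality
  have key : ∀ u : Fin p → ℝ, ∑ j, ∑ l, u j * Shat j l * u l
      ≤ (2/c) * ∑ j, ∑ l, u j * Spop j l * u l := by
    intro u
    rw [hShat u, hSpop u, Finset.mul_sum]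
    refine Finset.sum_le_sum fun m _ => ?_
    have ha := hn1R m
    have hb := hnbR m
    have hAne : (A m).Nonempty := Finset.card_pos.mp (by rw [hA m]; exact Nat.lt_of_lt_of_le Nat.zero_lt_two (hn1 m))
    have hSA : ∑ i ∈ A m, (∑ j, u j * (x m i j - xbar1 m j))^2
        ≤ ∑ i, (∑ j, u j * (x m i j - xbar m j))^2 := by
      set v : Fin (nb m) → ℝ := fun i => ∑ j, u j * x m i j with hv
      have e1 : ∀ i, ∑ j, u j * (x m i j - xbar1 m j)
          = v i - (∑ i' ∈ A m, v i') / ((A m).card : ℝ) := by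
        intro i
        have hmean : ∑ j, u j * xbar1 m j = (∑ i' ∈ A m, v i') / ((A m).card : ℝ) := by
          rw [hA m]
          have : ∀ j, u j * xbar1 m j = (∑ i' ∈ A m, u j * x m i' j) / (n1 m : ℝ) := by
            intro j
            show u j * ((∑ i' ∈ A m, x m i' j) / (n1 m : ℝ)) = _
            rw [← mul_div_assoc, Finset.mul_sum]
          simp_rw [this]
          rw [← Finset.sum_div, Finset.sum_comm]
        simp_rw [mul_sub]
        rw [Finset.sum_sub_distrib, hmean]
      have e2 : ∀ i, ∑ j, u j * (x m i j - xbar m j) = v i - (∑ j, u j * xbar m j) := by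
        intro i
        simp_rw [mul_sub]
        rw [Finset.sum_sub_distrib]
      calc ∑ i ∈ A m, (∑ j, u j * (x m i j - xbar1 m j))^2
          = ∑ i ∈ A m, (v i - (∑ i' ∈ A m, v i') / ((A m).card : ℝ))^2 :=
            Finset.sum_congr rfl fun i _ => by rw [e1 i]
        _ ≤ ∑ i ∈ A m, (v i - (∑ j, u j * xbar m j))^2 :=
            sum_sq_dev_mean_le (A m) hAne v _
        _ ≤ ∑ i, (v i - (∑ j, u j * xbar m j))^2 :=
            Finset.sum_le_sum_of_subset_of_nonneg (Finset.subset_univ _)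
              (fun i _ _ => sq_nonneg _)
        _ = ∑ i, (∑ j, u j * (x m i j - xbar m j))^2 :=
            Finset.sum_congr rfl fun i _ => by rw [e2 i]
    have hk : π m * (1/((n1 m:ℝ)-1)) ≤ (2/c) * (π m * (1/((nb m:ℝ)-1))) := by
      have hcb : c * (nb m : ℝ) ≤ (n1 m : ℝ) := (le_div_iff₀ (by linarith)).mp (hce m)
      have h1 : (0:ℝ) < (n1 m:ℝ) - 1 := by linarith
      have h2 : (0:ℝ) < (nb m:ℝ) - 1 := by linarith
      have hfrac : 1/((n1 m:ℝ)-1) ≤ (2/c) * (1/((nb m:ℝ)-1)) := by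
        rw [div_mul_div_comm, mul_one, div_le_div_iff₀ h1 (by positivity)]
        nlinarith
      calc π m * (1/((n1 m:ℝ)-1)) ≤ π m * ((2/c) * (1/((nb m:ℝ)-1))) :=
            mul_le_mul_of_nonneg_left hfrac (hπ m)
        _ = (2/c) * (π m * (1/((nb m:ℝ)-1))) := by ring
    have hSPnn : 0 ≤ ∑ i, (∑ j, u j * (x m i j - xbar m j))^2 :=
      Finset.sum_nonneg fun i _ => sq_nonneg _
    have hkAnn : 0 ≤ π m * (1/((n1 m:ℝ)-1)) :=
      mul_nonneg (hπ m) (le_of_lt (one_div_pos.mpr (by linarith)))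
    calc (π m * (1/((n1 m:ℝ)-1))) * ∑ i ∈ A m, (∑ j, u j * (x m i j - xbar1 m j))^2
        ≤ (π m * (1/((n1 m:ℝ)-1))) * ∑ i, (∑ j, u j * (x m i j - xbar m j))^2 :=
          mul_le_mul_of_nonneg_left hSA hkAnn
      _ ≤ ((2/c) * (π m * (1/((nb m:ℝ)-1)))) * ∑ i, (∑ j, u j * (x m i j - xbar m j))^2 :=
          mul_le_mul_of_nonneg_right hk hSPnn
      _ = (2/c) * ((π m * (1/((nb m:ℝ)-1))) * ∑ i, (∑ j, u j * (x m i j - xbar m j))^2) := by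
          ring
  -- supremum argument
  show sSup _ ≤ (2/c) * sSup _
  set T : Set ℝ := {r : ℝ | ∃ u : Fin p → ℝ, ∑ j, u j ^ 2 = 1 ∧
    r = ∑ j, ∑ l, u j * Spop j l * u l} with hT
  have hbddT : BddAbove T := by
    refine ⟨∑ j, ∑ l, |Spop j l|, fun r hr => ?_⟩
    obtain ⟨u, hu, rfl⟩ := hr
    have habs : ∀ j, |u j| ≤ 1 := by
      intro j
      have h1 : u j ^ 2 ≤ 1 := by
        rw [← hu]
        exact Finset.single_le_sum (f := fun j => u j ^ 2) (fun _ _ => sq_nonneg _)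
          (Finset.mem_univ j)
      nlinarith [abs_nonneg (u j), sq_abs (u j)]
    refine Finset.sum_le_sum fun j _ => Finset.sum_le_sum fun l _ => ?_
    calc u j * Spop j l * u l ≤ |u j * Spop j l * u l| := le_abs_self _
      _ = |u j| * |Spop j l| * |u l| := by rw [abs_mul, abs_mul]
      _ ≤ 1 * |Spop j l| * 1 := by
          gcongr
          · exact habs j
          · exact habs l
      _ = |Spop j l| := by ring
  have hT0 : 0 ≤ sSup T := by
    rcases Set.eq_empty_or_nonempty T with h | ⟨t, ht⟩
    · rw [h, Real.sSup_empty]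
    · obtain ⟨u, hu, rfl⟩ := ht
      exact le_trans (hSpop_nonneg u) (le_csSup hbddT ⟨u, hu, rfl⟩)
  have hR : 0 ≤ (2/c) * sSup T := mul_nonneg (by positivity) hT0
  refine Real.sSup_le (fun r hr => ?_) hR
  obtain ⟨u, hu, rfl⟩ := hr
  calc ∑ j, ∑ l, u j * Shat j l * u l ≤ (2/c) * ∑ j, ∑ l, u j * Spop j l * u l := key u
    _ ≤ (2/c) * sSup T :=
        mul_le_mul_of_nonneg_left (le_csSup hbddT ⟨u, hu, rfl⟩) (by positivity)
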